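/- Let Λ be a 2-graph with a single vertex that is finite with at least two edges of each colour. Suppose m ≠ n in ℕ² satisfy λ(m, m + d(λ) − (m ∨ n)) = λ(n, n + d(λ) − (m ∨ n)) for all λ ∈ Λ with d(λ) ≥ m ∨ n, and suppose a, b are positive integers with m = (m ∧ n) + (a,0) and n = (m ∧ n) + (0,b). Then for every λ ∈ Λ with d(λ) ≥ (a,b) one has λ((a,0), d(λ) − (0,b)) = λ((0,b), d(λ) − (a,0)). -/

import Mathlib

/-- Let `Λ` be a 2-graph with a single vertex (a monoid with an additive
degree map `d : Λ → ℕ²` having the unique factorisation property), finite with at least two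
edges of each colour.  For `p ≤ q ≤ d lam`, `seg lam p q` denotes the segment `lam(p,q)`.
Suppose `m ≠ n` in `ℕ²` satisfy `lam(m, m + d lam - (m ⊔ n)) = lam(n, n + d lam - (m ⊔ n))`
for all `lam` with `d lam ≥ m ⊔ n`, and `a, b` are positive integers with
`m = (m ⊓ n) + (a,0)` and `n = (m ⊓ n) + (0,b)`.  Then every `lam` with `d lam ≥ (a,b)`
satisfies `lam((a,0), d lam - (0,b)) = lam((0,b), d lam - (a,0))`. -/
theorem stmt14 {Λ : Type*} [Monoid Λ] (d : Λ → ℕ × ℕ)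
    (hd : ∀ x y : Λ, d (x * y) = d x + d y)
    (hfac : ∀ (lam : Λ) (p q : ℕ × ℕ), d lam = p + q →
      ∃! mn : Λ × Λ, d mn.1 = p ∧ d mn.2 = q ∧ lam = mn.1 * mn.2)
    (seg : Λ → ℕ × ℕ → ℕ × ℕ → Λ)
    (hseg : ∀ (lam : Λ) (p q : ℕ × ℕ), p ≤ q → q ≤ d lam →
      d (seg lam p q) = q - p ∧ ∃ α γ : Λ, d α = p ∧ lam = α * seg lam p q * γ)
    (hfinB : {e : Λ | d e = (1, 0)}.Finite) (hfinR : {e : Λ | d e = (0, 1)}.Finite)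
    (h2B : 2 ≤ Nat.card {e : Λ | d e = (1, 0)}) (h2R : 2 ≤ Nat.card {e : Λ | d e = (0, 1)})
    (m n : ℕ × ℕ) (hmn : m ≠ n)
    (hper : ∀ lam : Λ, m ⊔ n ≤ d lam →
      seg lam m (m + d lam - (m ⊔ n)) = seg lam n (n + d lam - (m ⊔ n)))
    (a b : ℕ) (ha : 0 < a) (hb : 0 < b)
    (hm : m = m ⊓ n + (a, 0)) (hn : n = m ⊓ n + (0, b)) :
    ∀ lam : Λ, (a, b) ≤ d lam →
      seg lam (a, 0) (d lam - (0, b)) = seg lam (0, b) (d lam - (a, 0)) := by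
  intro lam hlam
  rw [Prod.le_def] at hlam
  obtain ⟨hla, hlb⟩ := hlam
  simp only at hla hlb
  -- the degree of the identity is zero
  have hd1 : d 1 = 0 := by
    have h := hd 1 1
    rw [mul_one, Prod.ext_iff, Prod.fst_add, Prod.snd_add] at h
    rw [Prod.ext_iff, Prod.fst_zero, Prod.snd_zero]
    exact ⟨by omega, by omega⟩
  -- uniqueness of segments
  have key : ∀ (x : Λ) (p q : ℕ × ℕ), p ≤ q → q ≤ d x →
      ∀ α β γ : Λ, d α = p → d β = q - p → x = α * β * γ → β = seg x p q := by
    intro x p q hpq hq α β γ hα hβ hx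
    obtain ⟨hds, α', γ', hα', hx'⟩ := hseg x p q hpq hq
    have hpq' := hpq; have hq' := hq
    rw [Prod.le_def] at hpq' hq'
    have hdx : d x = p + (d x - p) := by
      rw [Prod.ext_iff]
      simp only [Prod.fst_add, Prod.snd_add, Prod.fst_sub, Prod.snd_sub]
      constructor <;> omega
    obtain ⟨mn0, -, huniq⟩ := hfac x p (d x - p) hdx
    have hdbg : d (β * γ) = d x - p := by
      have h1 : d x = d α + d (β * γ) := by rw [hx, mul_assoc, hd]
      rw [hα, Prod.ext_iff] at h1
      simp only [Prod.fst_add, Prod.snd_add] at h1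
      rw [Prod.ext_iff]
      simp only [Prod.fst_sub, Prod.snd_sub]
      constructor <;> omega
    have hxx' : x = α' * (seg x p q * γ') := by rw [← mul_assoc, ← hx']
    have hdsg : d (seg x p q * γ') = d x - p := by
      have h1 : d x = d α' + d (seg x p q * γ') := by
        conv_lhs => rw [hxx']
        rw [hd]
      rw [hα', Prod.ext_iff] at h1
      simp only [Prod.fst_add, Prod.snd_add] at h1
      rw [Prod.ext_iff]
      simp only [Prod.fst_sub, Prod.snd_sub]
      constructor <;> omega
    have h1 := huniq (α, β * γ) ⟨hα, hdbg, by rw [hx, mul_assoc]⟩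
    have h2 := huniq (α', seg x p q * γ') ⟨hα', hdsg, hxx'⟩
    have heq : β * γ = seg x p q * γ' := congrArg Prod.snd (h1.trans h2.symm)
    have hdγ' : d γ' = d γ := by
      have h3 : d β + d γ = d (seg x p q) + d γ' := by rw [← hd, ← hd, heq]
      rw [hβ, hds, Prod.ext_iff] at h3
      simp only [Prod.fst_add, Prod.snd_add, Prod.fst_sub, Prod.snd_sub] at h3
      rw [Prod.ext_iff]
      exact ⟨by omega, by omega⟩
    obtain ⟨mn2, -, huniq2⟩ := hfac (β * γ) (q - p) (d γ) (by rw [hd, hβ])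
    have h3 := huniq2 (β, γ) ⟨hβ, rfl, rfl⟩
    have h4 := huniq2 (seg x p q, γ') ⟨hds, hdγ', heq⟩
    exact congrArg Prod.fst (h3.trans h4.symm)
  -- existence of elements of every degree
  have hex : ∀ c : ℕ × ℕ, ∃ μ : Λ, d μ = c := by
    obtain ⟨⟨⟨e, he⟩⟩, -⟩ := Nat.card_pos_iff.mp
      (lt_of_lt_of_le (by norm_num) h2B)
    obtain ⟨⟨⟨f, hf⟩⟩, -⟩ := Nat.card_pos_iff.mp
      (lt_of_lt_of_le (by norm_num) h2R)
    have hpB : ∀ i : ℕ, d (e ^ i) = (i, 0) := by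
      intro i
      induction i with
      | zero => rw [pow_zero]; exact hd1
      | succ j ih =>
        rw [pow_succ, hd, ih, he, Prod.ext_iff]
        simp only [Prod.fst_add, Prod.snd_add]
        constructor <;> simp
    have hpR : ∀ i : ℕ, d (f ^ i) = (0, i) := by
      intro i
      induction i with
      | zero => rw [pow_zero]; exact hd1
      | succ j ih =>
        rw [pow_succ, hd, ih, hf, Prod.ext_iff]
        simp only [Prod.fst_add, Prod.snd_add]
        constructor <;> simp
    intro c
    refine ⟨e ^ c.1 * f ^ c.2, ?_⟩
    rw [hd, hpB, hpR, Prod.ext_iff]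
    simp only [Prod.fst_add, Prod.snd_add]
    constructor <;> simp
  -- the shift lemma
  have shift : ∀ (μ x : Λ) (p q : ℕ × ℕ), p ≤ q → q ≤ d x →
      seg (μ * x) (d μ + p) (d μ + q) = seg x p q := by
    intro μ x p q hpq hq
    obtain ⟨hds, α, γ, hα, hx⟩ := hseg x p q hpq hq
    refine (key (μ * x) (d μ + p) (d μ + q) (add_le_add_right hpq _)
      (by rw [hd]; exact add_le_add_right hq _) (μ * α) (seg x p q) γ
      (by rw [hd, hα]) ?_ ?_).symm
    · rw [hds, Prod.ext_iff]
      simp only [Prod.fst_sub, Prod.snd_sub, Prod.fst_add, Prod.snd_add]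
      constructor <;> omega
    · conv_lhs => rw [hx]
      simp only [mul_assoc]
  -- put k = m ⊓ n
  set k := m ⊓ n with hk
  obtain ⟨μ, hμ⟩ := hex k
  have hm1 : m.1 = k.1 + a := by rw [hm, Prod.fst_add]
  have hm2 : m.2 = k.2 := by rw [hm, Prod.snd_add]; simp
  have hn1 : n.1 = k.1 := by rw [hn, Prod.fst_add]; simp
  have hn2 : n.2 = k.2 + b := by rw [hn, Prod.snd_add]
  have hs1 : (m ⊔ n).1 = k.1 + a := by
    rw [Prod.fst_sup, hm1, hn1]
    omega
  have hs2 : (m ⊔ n).2 = k.2 + b := by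
    rw [Prod.snd_sup, hm2, hn2]
    omega
  have hmem : m ⊔ n ≤ d (μ * lam) := by
    rw [hd, hμ, Prod.le_def, Prod.fst_add, Prod.snd_add, hs1, hs2]
    constructor <;> omega
  have hE := hper (μ * lam) hmem
  have e1 : m + d (μ * lam) - (m ⊔ n) = d μ + (d lam - (0, b)) := by
    rw [hd, hμ, Prod.ext_iff]
    simp only [Prod.fst_sub, Prod.snd_sub, Prod.fst_add, Prod.snd_add, hs1, hs2, hm1, hm2]
    constructor <;> (try simp) <;> omega
  have e2 : n + d (μ * lam) - (m ⊔ n) = d μ + (d lam - (a, 0)) := by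
    rw [hd, hμ, Prod.ext_iff]
    simp only [Prod.fst_sub, Prod.snd_sub, Prod.fst_add, Prod.snd_add, hs1, hs2, hn1, hn2]
    constructor <;> (try simp) <;> omega
  have em : m = d μ + (a, 0) := by rw [hμ]; exact hm
  have en : n = d μ + (0, b) := by rw [hμ]; exact hn
  have h1 : (a, 0) ≤ d lam - (0, b) := by
    rw [Prod.le_def]
    simp only [Prod.fst_sub, Prod.snd_sub]
    constructor <;> (try simp) <;> omega
  have h2 : d lam - (0, b) ≤ d lam := by
    rw [Prod.le_def, Prod.fst_sub, Prod.snd_sub]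
    exact ⟨Nat.sub_le _ _, Nat.sub_le _ _⟩
  have h3 : (0, b) ≤ d lam - (a, 0) := by
    rw [Prod.le_def]
    simp only [Prod.fst_sub, Prod.snd_sub]
    constructor <;> (try simp) <;> omega
  have h4 : d lam - (a, 0) ≤ d lam := by
    rw [Prod.le_def, Prod.fst_sub, Prod.snd_sub]
    exact ⟨Nat.sub_le _ _, Nat.sub_le _ _⟩
  rw [e1, e2, em, en, shift μ lam (a, 0) (d lam - (0, b)) h1 h2,
    shift μ lam (0, b) (d lam - (a, 0)) h3 h4] at hE
  exact hE
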